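/- arXiv:2307.02598 — 3 statements merged into one kernel-verified Lean document; each statement's English description precedes it below -/
import Mathlib

section
/- Let 𝒞 be a connected topological space and M : 𝒞 → ℝ^{d×d} a continuous map such that M(c) is a B-block permutation matrix for every c ∈ 𝒞. Then there exists a single B-respecting permutation π such that for all c ∈ 𝒞 and all distinct blocks B, B' ∈ 𝓑, the submatrix M(c)_{π(B'), B} = 0. -/
/-- `M` is block diagonal w.r.t. the block-assignment `b`. -/
def BlockDiag {d : ℕ} {ι : Type*} (b : Fin d → ι) (M : Matrix (Fin d) (Fin d) ℝ) : Prop :=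
  ∀ i j, b i ≠ b j → M i j = 0

/-- The permutation matrix of `π`, i.e. `P e_j = e_{π j}`. -/
def PermMat {d : ℕ} (π : Equiv.Perm (Fin d)) : Matrix (Fin d) (Fin d) ℝ :=
  fun i j => if π j = i then 1 else 0

/-- `π` respects the blocks (fibers of `b`). -/
def RespectsBlocks {d : ℕ} {ι : Type*} (b : Fin d → ι) (π : Equiv.Perm (Fin d)) : Prop :=
  ∀ i j, b i = b j ↔ b (π i) = b (π j)

/-- `A` is a `B`-block permutation matrix: invertible and of the form `C * P_π` with
`π` a `B`-respecting permutation and `C` block diagonal. -/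
def IsBlockPermMat {d : ℕ} {ι : Type*} (b : Fin d → ι)
    (A : Matrix (Fin d) (Fin d) ℝ) : Prop :=
  IsUnit A ∧ ∃ π : Equiv.Perm (Fin d), RespectsBlocks b π ∧
    ∃ C, BlockDiag b C ∧ A = C * PermMat π

lemma mul_permMat_apply {d : ℕ} (C : Matrix (Fin d) (Fin d) ℝ) (π : Equiv.Perm (Fin d))
    (i j : Fin d) : (C * PermMat π) i j = C i (π j) := by
  classical
  simp [Matrix.mul_apply, PermMat]

lemma exists_row {d : ℕ} {A : Matrix (Fin d) (Fin d) ℝ} (hA : IsUnit A) (j : Fin d) :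
    ∃ i, A i j ≠ 0 := by
  by_contra h
  push_neg at h
  obtain ⟨B, hB⟩ := hA.exists_left_inv
  have h1 : (B * A) j j = 1 := by rw [hB]; simp [Matrix.one_apply]
  rw [Matrix.mul_apply] at h1
  simp [h] at h1

/-- If `𝒞` is connected and `M : 𝒞 → ℝ^{d×d}` is continuous with `M c` a `B`-block
permutation matrix for every `c`, then there is a single `B`-respecting permutation `π`
such that for all `c` and all indices `i, j` in distinct blocks, `M c (π i) j = 0`
(i.e. the submatrix `M(c)_{π(B'),B}` vanishes for distinct blocks `B ≠ B'`). -/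
theorem stmt13 {d : ℕ} {ι : Type*} (b : Fin d → ι)
    {𝒞 : Type*} [TopologicalSpace 𝒞] (hconn : ConnectedSpace 𝒞)
    (M : 𝒞 → Matrix (Fin d) (Fin d) ℝ) (hM : Continuous M)
    (hblock : ∀ c, IsBlockPermMat b (M c)) :
    ∃ π : Equiv.Perm (Fin d), RespectsBlocks b π ∧
      ∀ c, ∀ i j : Fin d, b i ≠ b j → M c (π i) j = 0 := by
  classical
  have key : ∀ c, ∃ π : Equiv.Perm (Fin d), RespectsBlocks b π ∧
      ∀ i j, M c i j ≠ 0 → b i = b (π j) := by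
    intro c
    obtain ⟨hu, π, hπ, C, hC, hEq⟩ := (hblock c).imp id id
    refine ⟨π, hπ, fun i j hne => ?_⟩
    by_contra hb
    exact hne (by rw [hEq, mul_permMat_apply, hC i (π j) hb])
  choose π hπ1 hπ2 using key
  have hrow : ∀ c j, ∃ i, M c i j ≠ 0 := fun c j => exists_row (hblock c).1 j
  have hg : ∀ c j i, M c i j ≠ 0 → b (π c j) = b i := fun c j i h => (hπ2 c i j h).symm
  have hloc : ∀ c, ∀ᶠ c' in nhds c, ∀ j, b (π c' j) = b (π c j) := by
    intro c
    refine Filter.eventually_all.2 (fun j => ?_)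
    obtain ⟨i, hi⟩ := hrow c j
    have hcont : Continuous fun c' => M c' i j :=
      (continuous_apply j).comp ((continuous_apply i).comp hM)
    filter_upwards [hcont.continuousAt.eventually_ne hi] with c' h
    rw [hg c' j i h, hg c j i hi]
  obtain ⟨c₀⟩ := hconn.toNonempty
  set S := {c | ∀ j, b (π c j) = b (π c₀ j)} with hS
  have hopen : IsOpen S := by
    rw [isOpen_iff_mem_nhds]
    intro c hc
    filter_upwards [hloc c] with c' h j
    rw [h j, hc j]
  have hclosed : IsClosed S := by
    rw [← isOpen_compl_iff, isOpen_iff_mem_nhds]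
    intro c hc
    filter_upwards [hloc c] with c' h hc'
    exact hc (fun j => by rw [← h j, hc' j])
  have hall : S = Set.univ := by
    rcases isClopen_iff.mp ⟨hclosed, hopen⟩ with h | h
    · exact absurd h (Set.nonempty_iff_ne_empty.mp ⟨c₀, fun j => rfl⟩)
    · exact h
  refine ⟨π c₀, hπ1 c₀, fun c i j hne => ?_⟩
  by_contra h
  have hc : c ∈ S := hall ▸ Set.mem_univ c
  have h2 := hπ2 c (π c₀ i) j h
  rw [hc j] at h2
  exact hne ((hπ1 c₀ i j).mpr h2)
end

section
/- Suppose the learned additive decoder satisfies f̂^{(B)}(z_B) = f^{(π(B))}(v̄_{π(B)}(z_B)) + c^{(B)} for all z_B in Ẑ^train_B, for every block B, with Σ_B c^{(B)} = 0. Then the equality of full decoders f̂(z) = f ∘ v̄(z) extends from Ẑ^train to the Cartesian-product extension CPE_𝓑(Ẑ^train) := Π_{B∈𝓑} Ẑ^train_B, where v̄ concatenates the block maps v̄_{π(B)}. Moreover f̂(CPE_𝓑(Ẑ^train)) = f(CPE_𝓑(Z^train)) whenever each v̄_{π(B)} is a bijection from Ẑ^train_B onto Z^train_{π(B)}. -/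
/-- Cartesian-product extrapolation. Latents are modeled as dependent functions
`z : ∀ B, β B → ℝ` (one sub-vector per block `B`); the projection of a set `W` onto
block `B` is `(fun w => w B) '' W`, and the Cartesian-product extension `CPE(W)` is
`{z | ∀ B, z B ∈ W_B}`. Suppose each learned block decoder imitates a ground-truth
block decoder: `F̂_B(z_B) = F_{π(B)}(v̄_B(z_B)) + c_B` on `Ẑ^train_B`, with
`∑_B c_B = 0`. Then the full decoders with outer invertible map `s` agree on all of
`CPE(Ẑ^train)`, and if moreover each `v̄_B` is a bijection from `Ẑ^train_B` onto
`Z^train_{π(B)}`, then `f̂(CPE(Ẑ^train)) = f(CPE(Z^train))`. -/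
theorem stmt18 {dx : ℕ} {ι : Type*} [Fintype ι]
    (β : ι → Type*)
    (Zhat Z : Set (∀ B, β B → ℝ))
    (π : Equiv.Perm ι)
    (F Fhat : ∀ B : ι, (β B → ℝ) → (Fin dx → ℝ))
    (vbar : ∀ B : ι, (β B → ℝ) → (β (π B) → ℝ))
    (c : ι → Fin dx → ℝ)
    (s : (Fin dx → ℝ) → (Fin dx → ℝ)) (hs : Function.Bijective s)
    (hblock : ∀ B : ι, ∀ zB ∈ (fun w => w B) '' Zhat,
      Fhat B zB = F (π B) (vbar B zB) + c B)
    (hc : ∑ B, c B = 0) :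
    (∀ z : ∀ B, β B → ℝ, (∀ B, z B ∈ (fun w => w B) '' Zhat) →
      s (∑ B, Fhat B (z B)) = s (∑ B, F (π B) (vbar B (z B)))) ∧
    ((∀ B, Set.BijOn (vbar B) ((fun w => w B) '' Zhat) ((fun w => w (π B)) '' Z)) →
      (fun z : ∀ B, β B → ℝ => s (∑ B, Fhat B (z B))) ''
          {z | ∀ B, z B ∈ (fun w => w B) '' Zhat}
        = (fun z : ∀ B, β B → ℝ => s (∑ B, F B (z B))) ''
          {z | ∀ B, z B ∈ (fun w => w B) '' Z}) := by
  have key : ∀ z : ∀ B, β B → ℝ, (∀ B, z B ∈ (fun w => w B) '' Zhat) →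
      (∑ B, Fhat B (z B)) = ∑ B, F (π B) (vbar B (z B)) := by
    intro z hz
    have : ∑ B, Fhat B (z B) = ∑ B, (F (π B) (vbar B (z B)) + c B) := by
      refine Finset.sum_congr rfl fun B _ => hblock B (z B) (hz B)
    rw [this, Finset.sum_add_distrib, hc, add_zero]
  refine ⟨fun z hz => by rw [key z hz], fun hbij => ?_⟩
  ext x
  simp only [Set.mem_image, Set.mem_setOf_eq]
  constructor
  · rintro ⟨z, hz, rfl⟩
    refine ⟨Equiv.piCongrLeft (fun i => β i → ℝ) π (fun B => vbar B (z B)),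
      fun B => ?_, ?_⟩
    · obtain ⟨A, rfl⟩ := π.surjective B
      rw [Equiv.piCongrLeft_apply_apply]
      exact (hbij A).mapsTo (hz A)
    · rw [key z hz]
      refine congrArg s ?_
      refine (Fintype.sum_equiv π _ _ fun B => ?_).symm
      rw [Equiv.piCongrLeft_apply_apply]
  · rintro ⟨w, hw, rfl⟩
    have hchoice : ∀ B : ι, ∃ zB ∈ (fun v => v B) '' Zhat, vbar B zB = w (π B) := by
      intro B
      exact (hbij B).surjOn (hw (π B))
    choose z hz hzeq using hchoice
    refine ⟨z, hz, ?_⟩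
    rw [key z hz]
    refine congrArg s ?_
    exact Fintype.sum_equiv π (fun B => F (π B) (vbar B (z B)))
      (fun B => F B (w B)) (fun B => by show F (π B) (vbar B (z B)) = F (π B) (w (π B)); rw [hzeq B])
end

section
/- Assume for each block B of the partition 𝓑 and any two distinct z_B, z'_B in Z_B there exists z_{B^c} with (z_B, z_{B^c}) ∈ Z and (z'_B, z_{B^c}) ∈ Z. If the sum map z ↦ Σ_{B∈𝓑} f^{(B)}(z_B) is injective on Z, then each f^{(B)} is injective on Z_B. -/
/-- Latents are modeled as dependent functions `z : ∀ B, β B → ℝ` (one sub-vector per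
block). Assume that for each block `B`, any two distinct values `z_B ≠ z'_B` in the
projection `Z_B` of `Z` can be completed by a common value of the remaining blocks:
there are `z, z' ∈ Z` with `z B = z_B`, `z' B = z'_B`, and `z B' = z' B'` for all
`B' ≠ B`. If the sum map `z ↦ ∑_B F_B(z_B)` is injective on `Z`, then every block
decoder `F_B` is injective on `Z_B`. -/
theorem stmt19 {dx : ℕ} {ι : Type*} [Fintype ι]
    (β : ι → Type*) (Z : Set (∀ B, β B → ℝ))
    (F : ∀ B : ι, (β B → ℝ) → (Fin dx → ℝ))
    (hcov : ∀ B : ι, ∀ zB ∈ (fun w => w B) '' Z, ∀ zB' ∈ (fun w => w B) '' Z,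
      zB ≠ zB' → ∃ z ∈ Z, ∃ z' ∈ Z, z B = zB ∧ z' B = zB' ∧
        ∀ B' ≠ B, z B' = z' B')
    (hinj : Set.InjOn (fun z : ∀ B, β B → ℝ => ∑ B, F B (z B)) Z) :
    ∀ B : ι, Set.InjOn (F B) ((fun w => w B) '' Z) := by
  intro B zB hzB zB' hzB' hF
  by_contra hne
  obtain ⟨z, hz, z', hz', hzBeq, hzB'eq, hagree⟩ := hcov B zB hzB zB' hzB' hne
  have hsum : (∑ B', F B' (z B')) = ∑ B', F B' (z' B') := by
    apply Finset.sum_congr rfl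
    intro B' _
    by_cases h : B' = B
    · subst h; rw [hzBeq, hzB'eq, hF]
    · rw [hagree B' h]
  have := hinj hz hz' hsum
  exact hne (by rw [← hzBeq, ← hzB'eq, this])
end
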